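/- The integral ∫₀^∞ s^{-2}(1 - e^{-s})² ds equals 2 log 2. -/

import Mathlib

open MeasureTheory Set Real Filter Topology

/-- Inner integral in `t`. -/
lemma aux_inner (s : ℝ) (hs : 0 < s) :
    ∫ t in Ioc (1:ℝ) 2, Real.exp (-(t * s)) = (Real.exp (-s) - Real.exp (-(2*s))) / s := by
  have h12 : (1:ℝ) ≤ 2 := by norm_num
  have : ∫ t in Ioc (1:ℝ) 2, Real.exp (-(t * s)) = ∫ t in (1:ℝ)..2, Real.exp (-(t * s)) := by
    rw [intervalIntegral.integral_of_le h12]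
  rw [this]
  have hderiv : ∀ t ∈ uIcc (1:ℝ) 2,
      HasDerivAt (fun t => -(Real.exp (-(t * s)) / s)) (Real.exp (-(t * s))) t := by
    intro t _
    have h1 : HasDerivAt (fun t : ℝ => -(t * s)) (-s) t := (hasDerivAt_mul_const s).neg
    have h2 : HasDerivAt (fun t : ℝ => Real.exp (-(t * s))) (Real.exp (-(t * s)) * (-s)) t :=
      (Real.hasDerivAt_exp _).comp t h1
    have h3 := (h2.div_const s).neg
    refine h3.congr_deriv ?_
    field_simp
  have hcont : IntervalIntegrable (fun t => Real.exp (-(t * s))) volume 1 2 :=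
    (Continuous.intervalIntegrable (by continuity) 1 2)
  rw [intervalIntegral.integral_eq_sub_of_hasDerivAt hderiv hcont]
  ring

/-- Inner integral in `s`. -/
lemma aux_inner_s (t : ℝ) (ht : 0 < t) :
    ∫ s in Ioi (0:ℝ), Real.exp (-(t * s)) = 1 / t := by
  have hderiv : ∀ s ∈ Ici (0:ℝ), HasDerivAt (fun s => -(Real.exp (-(t * s)) / t))
      (Real.exp (-(t * s))) s := by
    intro s _
    have h1 : HasDerivAt (fun s : ℝ => -(t * s)) (-t) s := by
      exact ((hasDerivAt_id s).const_mul t).neg.congr_deriv (by simp)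
    have h2 : HasDerivAt (fun s : ℝ => Real.exp (-(t * s))) (Real.exp (-(t * s)) * (-t)) s :=
      (Real.hasDerivAt_exp _).comp s h1
    have h3 := (h2.div_const t).neg
    refine h3.congr_deriv ?_
    field_simp
  have hint : IntegrableOn (fun s => Real.exp (-(t * s))) (Ioi (0:ℝ)) := by
    have := exp_neg_integrableOn_Ioi (0:ℝ) ht
    simpa [IntegrableOn, neg_mul] using this
  have htop : Tendsto (fun s => -(Real.exp (-(t * s)) / t)) atTop (𝓝 0) := by
    have h1 : Tendsto (fun s : ℝ => t * s) atTop atTop :=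
      Tendsto.const_mul_atTop ht tendsto_id
    have h2 : Tendsto (fun s : ℝ => Real.exp (-(t * s))) atTop (𝓝 0) :=
      Real.tendsto_exp_neg_atTop_nhds_zero.comp h1
    have := (h2.div_const t).neg
    simpa using this
  have := integral_Ioi_of_hasDerivAt_of_tendsto' hderiv hint htop
  rw [this]
  simp [mul_zero]

/-- Frullani for a = 1, b = 2. -/
lemma frullani12 :
    ∫ s in Ioi (0:ℝ), (Real.exp (-s) - Real.exp (-(2*s))) / s = Real.log 2 := by
  have hmeas : AEStronglyMeasurable (Function.uncurry fun s t => Real.exp (-(t * s)))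
      ((volume.restrict (Ioi (0:ℝ))).prod (volume.restrict (Ioc (1:ℝ) 2))) := by
    apply Continuous.aestronglyMeasurable
    exact Real.continuous_exp.comp (continuous_snd.mul continuous_fst).neg
  have hint : Integrable (Function.uncurry fun s t => Real.exp (-(t * s)))
      ((volume.restrict (Ioi (0:ℝ))).prod (volume.restrict (Ioc (1:ℝ) 2))) := by
    have hbound : Integrable (fun p : ℝ × ℝ => Real.exp (-p.1))
        ((volume.restrict (Ioi (0:ℝ))).prod (volume.restrict (Ioc (1:ℝ) 2))) := by
      have h1 : Integrable (fun s : ℝ => Real.exp (-s)) (volume.restrict (Ioi (0:ℝ))) := by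
        have := exp_neg_integrableOn_Ioi (0:ℝ) one_pos
        simpa [IntegrableOn] using this
      have h2 : Integrable (fun _ : ℝ => (1:ℝ)) (volume.restrict (Ioc (1:ℝ) 2)) := by
        apply integrable_const
      have := h1.mul_prod h2
      simpa using this
    apply hbound.mono' hmeas
    rw [Measure.prod_restrict]
    filter_upwards [ae_restrict_mem (measurableSet_Ioi.prod measurableSet_Ioc)] with p hp
    obtain ⟨hp1, hp2⟩ := hp
    simp only [Function.uncurry, Real.abs_exp, Real.norm_eq_abs]
    apply Real.exp_le_exp.mpr
    simp only [neg_le_neg_iff]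
    nlinarith [le_of_lt (mem_Ioi.mp hp1), hp2.1.le]
  have hswap := MeasureTheory.integral_integral_swap hint
  have lhs_eq : (∫ s in Ioi (0:ℝ), ∫ t in Ioc (1:ℝ) 2, Real.exp (-(t * s)))
      = ∫ s in Ioi (0:ℝ), (Real.exp (-s) - Real.exp (-(2*s))) / s := by
    apply setIntegral_congr_fun measurableSet_Ioi
    intro s hs
    exact aux_inner s hs
  have rhs_eq : (∫ t in Ioc (1:ℝ) 2, ∫ s in Ioi (0:ℝ), Real.exp (-(t * s)))
      = Real.log 2 := by
    have : (∫ t in Ioc (1:ℝ) 2, ∫ s in Ioi (0:ℝ), Real.exp (-(t * s)))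
        = ∫ t in Ioc (1:ℝ) 2, 1 / t := by
      apply setIntegral_congr_fun measurableSet_Ioc
      intro t ht
      exact aux_inner_s t (by linarith [ht.1])
    rw [this]
    have h12 : (1:ℝ) ≤ 2 := by norm_num
    rw [← intervalIntegral.integral_of_le h12]
    simp only [one_div]
    rw [integral_inv (by norm_num : (0:ℝ) ∉ uIcc 1 2)]
    norm_num
  rw [← lhs_eq, hswap, rhs_eq]

lemma rpow_neg_two_eq {s : ℝ} (hs : 0 < s) : s ^ (-2 : ℝ) = (s ^ 2)⁻¹ := by
  rw [Real.rpow_neg hs.le, show (2:ℝ) = ((2:ℕ):ℝ) by norm_num, Real.rpow_natCast]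

lemma one_sub_exp_neg_le {s : ℝ} (hs : 0 ≤ s) :
    0 ≤ 1 - Real.exp (-s) ∧ 1 - Real.exp (-s) ≤ s := by
  constructor
  · have : Real.exp (-s) ≤ 1 := Real.exp_le_one_iff.mpr (by linarith)
    linarith
  · have := Real.add_one_le_exp (-s)
    linarith

theorem stmt_1 :
    ∫ s in Ioi (0:ℝ), s ^ (-2 : ℝ) * (1 - Real.exp (-s)) ^ 2 = 2 * Real.log 2 := by
  have hu : ∀ s ∈ Ioi (0:ℝ), HasDerivAt (fun s => (1 - Real.exp (-s)) ^ 2)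
      (2 * (1 - Real.exp (-s)) * Real.exp (-s)) s := by
    intro s _
    have h1 : HasDerivAt (fun s : ℝ => 1 - Real.exp (-s)) (Real.exp (-s)) s := by
      have := ((Real.hasDerivAt_exp (-s)).comp s (hasDerivAt_neg s)).const_sub 1
      simpa using this
    have h2 := h1.pow 2
    refine h2.congr_deriv ?_
    norm_num
  have hv : ∀ s ∈ Ioi (0:ℝ), HasDerivAt (fun s : ℝ => -s⁻¹) ((s ^ 2)⁻¹) s := by
    intro s hs
    have := (hasDerivAt_inv (𝕜 := ℝ) (ne_of_gt (mem_Ioi.mp hs))).neg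
    rw [neg_neg] at this
    exact this
  have hmeas1 : AEStronglyMeasurable (fun s : ℝ => (1 - Real.exp (-s)) ^ 2 * (s ^ 2)⁻¹)
      (volume.restrict (Ioi (0:ℝ))) := by
    apply Measurable.aestronglyMeasurable
    exact (((measurable_const.sub (Real.measurable_exp.comp measurable_neg)).pow_const 2).mul
      ((measurable_id.pow_const 2).inv))
  have hmeas2 : AEStronglyMeasurable (fun s : ℝ => 2 * (1 - Real.exp (-s)) * Real.exp (-s) * -s⁻¹)
      (volume.restrict (Ioi (0:ℝ))) := by
    apply Measurable.aestronglyMeasurable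
    exact (((measurable_const.mul (measurable_const.sub
      (Real.measurable_exp.comp measurable_neg))).mul
      (Real.measurable_exp.comp measurable_neg)).mul measurable_id.inv.neg)
  have huv' : IntegrableOn (fun s : ℝ => (1 - Real.exp (-s)) ^ 2 * (s ^ 2)⁻¹) (Ioi (0:ℝ)) := by
    rw [← Ioc_union_Ioi_eq_Ioi (by norm_num : (0:ℝ) ≤ 1)]
    apply IntegrableOn.union
    · apply Integrable.mono' (integrable_const (1:ℝ)) (hmeas1.mono_set Ioc_subset_Ioi_self)
      filter_upwards [ae_restrict_mem measurableSet_Ioc] with s hs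
      have hs0 : (0:ℝ) < s := hs.1
      obtain ⟨h0, h1⟩ := one_sub_exp_neg_le hs0.le
      have hsq : (1 - Real.exp (-s)) ^ 2 ≤ s ^ 2 := by nlinarith
      have hspos : (0:ℝ) < s ^ 2 := by positivity
      rw [Real.norm_eq_abs, abs_of_nonneg (mul_nonneg (sq_nonneg _) (inv_nonneg.mpr (sq_nonneg _)))]
      calc (1 - Real.exp (-s)) ^ 2 * (s ^ 2)⁻¹ ≤ s ^ 2 * (s ^ 2)⁻¹ :=
            mul_le_mul_of_nonneg_right hsq (by positivity)
        _ = 1 := by field_simp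
    · apply Integrable.mono' (integrableOn_Ioi_rpow_of_lt (by norm_num : (-2:ℝ) < -1) one_pos)
        (hmeas1.mono_set (Ioi_subset_Ioi (by norm_num)))
      filter_upwards [ae_restrict_mem measurableSet_Ioi] with s hs
      have hs0 : (0:ℝ) < s := lt_trans one_pos hs
      obtain ⟨h0, h1⟩ := one_sub_exp_neg_le hs0.le
      have hsq : (1 - Real.exp (-s)) ^ 2 ≤ 1 := by nlinarith [Real.exp_pos (-s)]
      rw [Real.norm_eq_abs, abs_of_nonneg (mul_nonneg (sq_nonneg _) (inv_nonneg.mpr (sq_nonneg _))), rpow_neg_two_eq hs0]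
      have hinv : (0:ℝ) ≤ (s ^ 2)⁻¹ := by positivity
      nlinarith
  have hu'v : IntegrableOn (fun s : ℝ => 2 * (1 - Real.exp (-s)) * Real.exp (-s) * -s⁻¹)
      (Ioi (0:ℝ)) := by
    have hbig : Integrable (fun s : ℝ => 2 * Real.exp (-s)) (volume.restrict (Ioi (0:ℝ))) := by
      have := (exp_neg_integrableOn_Ioi (0:ℝ) one_pos).const_mul 2
      simpa [IntegrableOn] using this
    apply Integrable.mono' hbig hmeas2
    filter_upwards [ae_restrict_mem measurableSet_Ioi] with s hs
    have hs0 : (0:ℝ) < s := hs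
    obtain ⟨h0, h1⟩ := one_sub_exp_neg_le hs0.le
    have he : (0:ℝ) < Real.exp (-s) := Real.exp_pos _
    have hinv : (0:ℝ) ≤ s⁻¹ := inv_nonneg.mpr hs0.le
    rw [Real.norm_eq_abs]
    have habs : |2 * (1 - Real.exp (-s)) * Real.exp (-s) * -s⁻¹|
        = 2 * (1 - Real.exp (-s)) * Real.exp (-s) * s⁻¹ := by
      rw [abs_of_nonpos (by
        linarith [mul_nonneg (mul_nonneg (mul_nonneg (by norm_num : (0:ℝ) ≤ 2) h0) he.le) hinv])]
      ring
    rw [habs]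
    have hss : s * s⁻¹ = 1 := mul_inv_cancel₀ (ne_of_gt hs0)
    nlinarith [mul_le_mul_of_nonneg_right h1 hinv]
  have h_zero : Tendsto (fun s : ℝ => (1 - Real.exp (-s)) ^ 2 * -s⁻¹)
      (𝓝[>] (0:ℝ)) (𝓝 0) := by
    have hev : ∀ᶠ s in 𝓝[>] (0:ℝ),
        ‖(1 - Real.exp (-s)) ^ 2 * -s⁻¹‖ ≤ s := by
      filter_upwards [self_mem_nhdsWithin] with s hs
      have hs0 : (0:ℝ) < s := hs
      obtain ⟨h0, h1⟩ := one_sub_exp_neg_le hs0.le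
      have hinv : (0:ℝ) ≤ s⁻¹ := inv_nonneg.mpr hs0.le
      have hss : s * s⁻¹ = 1 := mul_inv_cancel₀ (ne_of_gt hs0)
      simp only [Pi.mul_apply, Real.norm_eq_abs]
      have habs : |(1 - Real.exp (-s)) ^ 2 * -s⁻¹| = (1 - Real.exp (-s)) ^ 2 * s⁻¹ := by
        rw [abs_of_nonpos (by linarith [mul_nonneg (sq_nonneg (1 - Real.exp (-s))) hinv])]
        ring
      rw [habs]
      have hsq : (1 - Real.exp (-s)) ^ 2 ≤ s ^ 2 := by nlinarith
      nlinarith [mul_le_mul_of_nonneg_right hsq hinv]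
    exact squeeze_zero_norm' hev (tendsto_id.mono_left nhdsWithin_le_nhds)
  have h_top : Tendsto (fun s : ℝ => (1 - Real.exp (-s)) ^ 2 * -s⁻¹)
      atTop (𝓝 0) := by
    have hev : ∀ᶠ s in atTop,
        ‖(1 - Real.exp (-s)) ^ 2 * -s⁻¹‖ ≤ s⁻¹ := by
      filter_upwards [eventually_gt_atTop (0:ℝ)] with s hs
      obtain ⟨h0, h1⟩ := one_sub_exp_neg_le hs.le
      have hsq : (1 - Real.exp (-s)) ^ 2 ≤ 1 := by nlinarith [Real.exp_pos (-s)]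
      have hinv : (0:ℝ) ≤ s⁻¹ := inv_nonneg.mpr hs.le
      simp only [Pi.mul_apply, Real.norm_eq_abs]
      have habs : |(1 - Real.exp (-s)) ^ 2 * -s⁻¹| = (1 - Real.exp (-s)) ^ 2 * s⁻¹ := by
        rw [abs_of_nonpos (by linarith [mul_nonneg (sq_nonneg (1 - Real.exp (-s))) hinv])]
        ring
      rw [habs]
      nlinarith [mul_le_mul_of_nonneg_right hsq hinv]
    exact squeeze_zero_norm' hev tendsto_inv_atTop_zero
  have hibp := integral_Ioi_mul_deriv_eq_deriv_mul hu hv huv' hu'v h_zero h_top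
  have hlhs : ∫ s in Ioi (0:ℝ), s ^ (-2 : ℝ) * (1 - Real.exp (-s)) ^ 2
      = ∫ s in Ioi (0:ℝ), (1 - Real.exp (-s)) ^ 2 * (s ^ 2)⁻¹ := by
    apply setIntegral_congr_fun measurableSet_Ioi
    intro s hs
    dsimp only
    rw [rpow_neg_two_eq hs]
    ring
  have hrhs : ∫ s in Ioi (0:ℝ), 2 * (1 - Real.exp (-s)) * Real.exp (-s) * -s⁻¹
      = -(2 * Real.log 2) := by
    have hcongr : ∫ s in Ioi (0:ℝ), 2 * (1 - Real.exp (-s)) * Real.exp (-s) * -s⁻¹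
        = ∫ s in Ioi (0:ℝ), (-2) * ((Real.exp (-s) - Real.exp (-(2*s))) / s) := by
      apply setIntegral_congr_fun measurableSet_Ioi
      intro s hs
      have hs0 : s ≠ 0 := ne_of_gt hs
      dsimp only
      rw [show -(2*s) = -s + -s by ring, Real.exp_add, div_eq_mul_inv]
      ring
    rw [hcongr, MeasureTheory.integral_const_mul, frullani12]
    ring
  rw [hlhs, hibp, hrhs]
  ring
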